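/- There exists an F-linear anti-automorphism ᾱ of the Kashiwara algebra 𝒦_q (i.e., an F-linear bijection with ᾱ(ab) = ᾱ(b)ᾱ(a) and ᾱ(1) = 1) which is involutive (ᾱ∘ᾱ = id) and satisfies ᾱ(γ^{±1/2}) = γ^{±1/2}, ᾱ(X(m)) = Ω(−m) and ᾱ(Ω(m)) = X(−m) for all m ∈ ℤ. -/
import Mathlib


noncomputable section

/-- `F = ℚ(s)`, the field of rational functions over `ℚ` in the indeterminate `s`. -/
abbrev F : Type := RatFunc ℚ

/-- `q = s²`, so that `q^{1/2} = s ∈ F`. -/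
def q : F := RatFunc.X ^ 2

/-- Generators of the Kashiwara algebra `𝒦_q`: `Ω(m)`, `X(n)` (`m, n ∈ ℤ`)
and `γ^{1/2}`, `γ^{-1/2}`. -/
inductive KGen : Type
  | om : ℤ → KGen
  | xm : ℤ → KGen
  | gh : KGen
  | ghi : KGen

/-- The free `F`-algebra on the generators. -/
abbrev KFA := FreeAlgebra F KGen

/-- `Ω(m)` in the free algebra. -/
def omF (m : ℤ) : KFA := FreeAlgebra.ι F (KGen.om m)
/-- `X(n)` in the free algebra. -/
def xmF (n : ℤ) : KFA := FreeAlgebra.ι F (KGen.xm n)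
/-- `γ^{1/2}` in the free algebra. -/
def ghF : KFA := FreeAlgebra.ι F KGen.gh
/-- `γ^{-1/2}` in the free algebra. -/
def ghiF : KFA := FreeAlgebra.ι F KGen.ghi
/-- `γ = (γ^{1/2})²` in the free algebra. -/
def gaF : KFA := ghF * ghF

/-- The defining relations of the Kashiwara algebra `𝒦_q`. -/
inductive KRel : KFA → KFA → Prop
  /- `γ^{1/2}` is central -/
  | central_gh (x : KGen) : KRel (ghF * FreeAlgebra.ι F x) (FreeAlgebra.ι F x * ghF)
  /- `γ^{-1/2}` is central -/
  | central_ghi (x : KGen) : KRel (ghiF * FreeAlgebra.ι F x) (FreeAlgebra.ι F x * ghiF)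
  /- `γ^{1/2}γ^{-1/2} = 1` -/
  | ginv : KRel (ghF * ghiF) 1
  /- `γ^{-1/2}γ^{1/2} = 1` -/
  | ginv' : KRel (ghiF * ghF) 1
  /- `q²γΩ(m)X(n+1) − Ω(m+1)X(n)
       = (q²γ − 1)δ_{m,−n−1}·1 + γX(n+1)Ω(m) − q²X(n)Ω(m+1)` -/
  | rel1 (m n : ℤ) :
      KRel (q ^ 2 • (gaF * omF m * xmF (n + 1)) - omF (m + 1) * xmF n)
        ((if m = -n - 1 then q ^ 2 • gaF - 1 else 0) + gaF * xmF (n + 1) * omF m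
          - q ^ 2 • (xmF n * omF (m + 1)))
  /- `q²Ω(k+1)Ω(l) − Ω(l)Ω(k+1) = Ω(k)Ω(l+1) − q²Ω(l+1)Ω(k)` -/
  | rel2 (k l : ℤ) :
      KRel (q ^ 2 • (omF (k + 1) * omF l) - omF l * omF (k + 1))
        (omF k * omF (l + 1) - q ^ 2 • (omF (l + 1) * omF k))
  /- `X(k+1)X(l) − q⁻²X(l)X(k+1) = q⁻²X(k)X(l+1) − X(l+1)X(k)` -/
  | rel3 (k l : ℤ) :
      KRel (xmF (k + 1) * xmF l - (q ^ 2)⁻¹ • (xmF l * xmF (k + 1)))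
        ((q ^ 2)⁻¹ • (xmF k * xmF (l + 1)) - xmF (l + 1) * xmF k)

/-- The Kashiwara algebra `𝒦_q`. -/
abbrev Kq := RingQuot KRel

/-- `Ω(m) ∈ 𝒦_q`. -/
def Om (m : ℤ) : Kq := RingQuot.mkAlgHom F KRel (omF m)
/-- `X(n) ∈ 𝒦_q`. -/
def Xm (n : ℤ) : Kq := RingQuot.mkAlgHom F KRel (xmF n)
/-- `γ^{1/2} ∈ 𝒦_q`. -/
def Gh : Kq := RingQuot.mkAlgHom F KRel ghF
/-- `γ^{-1/2} ∈ 𝒦_q`. -/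
def Ghi : Kq := RingQuot.mkAlgHom F KRel ghiF

/-- The left ideal `I = ∑_{k∈ℤ} 𝒦_q·Ω(k)`. -/
def Iq : Submodule Kq Kq := Submodule.span Kq (Set.range Om)

/-- `M = 𝒦_q/I`, a left `𝒦_q`-module. -/
abbrev Mq := Kq ⧸ Iq

/-- The image `1̄` of `1` in `M`. -/
def oneM : Mq := Submodule.Quotient.mk 1

/-! ### Auxiliary development for `stmt4` -/

open MulOpposite

lemma q_ne_zero : q ≠ 0 := by
  simp [q, pow_ne_zero, RatFunc.X_ne_zero]

lemma kq_mk_rel {x y : KFA} (h : KRel x y) :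
    RingQuot.mkAlgHom F KRel x = RingQuot.mkAlgHom F KRel y :=
  RingQuot.mkAlgHom_rel F h

lemma kq_gh_comm (g : KGen) :
    Gh * RingQuot.mkAlgHom F KRel (FreeAlgebra.ι F g)
      = RingQuot.mkAlgHom F KRel (FreeAlgebra.ι F g) * Gh := by
  have := kq_mk_rel (KRel.central_gh g)
  simpa [Gh, ghF, map_mul] using this

lemma kq_gh_comm_om (m : ℤ) : Gh * Om m = Om m * Gh := kq_gh_comm (KGen.om m)
lemma kq_gh_comm_xm (m : ℤ) : Gh * Xm m = Xm m * Gh := kq_gh_comm (KGen.xm m)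

lemma kq_ginv : Gh * Ghi = 1 := by
  have := kq_mk_rel KRel.ginv
  simpa [Gh, Ghi, ghF, ghiF, map_mul] using this

lemma kq_ginv' : Ghi * Gh = 1 := by
  have := kq_mk_rel KRel.ginv'
  simpa [Gh, Ghi, ghF, ghiF, map_mul] using this

lemma kq_rel1 (m n : ℤ) :
    q ^ 2 • (Gh * Gh * Om m * Xm (n + 1)) - Om (m + 1) * Xm n =
      (if m = -n - 1 then q ^ 2 • (Gh * Gh) - 1 else 0) + Gh * Gh * Xm (n + 1) * Om m
        - q ^ 2 • (Xm n * Om (m + 1)) := by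
  have := kq_mk_rel (KRel.rel1 m n)
  simpa [Om, Xm, Gh, gaF, ghF, map_mul, map_sub, map_add, map_smul, map_one, apply_ite]
    using this

lemma kq_rel2 (k l : ℤ) :
    q ^ 2 • (Om (k + 1) * Om l) - Om l * Om (k + 1) =
      Om k * Om (l + 1) - q ^ 2 • (Om (l + 1) * Om k) := by
  have := kq_mk_rel (KRel.rel2 k l)
  simpa [Om, map_mul, map_sub, map_smul] using this

lemma kq_rel3 (k l : ℤ) :
    Xm (k + 1) * Xm l - (q ^ 2)⁻¹ • (Xm l * Xm (k + 1)) =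
      (q ^ 2)⁻¹ • (Xm k * Xm (l + 1)) - Xm (l + 1) * Xm k := by
  have := kq_mk_rel (KRel.rel3 k l)
  simpa [Xm, map_mul, map_sub, map_smul] using this

/-- Images of the generators under the anti-automorphism. -/
def gimg : KGen → Kq
  | .om m => Xm (-m)
  | .xm n => Om (-n)
  | .gh => Gh
  | .ghi => Ghi

/-- The lift of `gimg` to the free algebra, landing in the opposite algebra. -/
def betaF : KFA →ₐ[F] Kqᵐᵒᵖ := FreeAlgebra.lift F (fun g => op (gimg g))

lemma betaF_ι (g : KGen) : betaF (FreeAlgebra.ι F g) = op (gimg g) := by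
  simp [betaF]

lemma betaF_om (m : ℤ) : betaF (omF m) = op (Xm (-m)) := betaF_ι (KGen.om m)
lemma betaF_xm (m : ℤ) : betaF (xmF m) = op (Om (-m)) := betaF_ι (KGen.xm m)
lemma betaF_gh : betaF ghF = op Gh := betaF_ι KGen.gh
lemma betaF_ghi : betaF ghiF = op Ghi := betaF_ι KGen.ghi

lemma betaF_rel : ∀ ⦃x y : KFA⦄, KRel x y → betaF x = betaF y := by
  intro x y h
  induction h with
  | central_gh g =>
      apply unop_injective
      simp only [map_mul, betaF_gh, betaF_ι, unop_mul, unop_op]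
      cases g with
      | om m => exact (kq_gh_comm_xm (-m)).symm
      | xm m => exact (kq_gh_comm_om (-m)).symm
      | gh => rfl
      | ghi => show Ghi * Gh = Gh * Ghi; rw [kq_ginv', kq_ginv]
  | central_ghi g =>
      apply unop_injective
      simp only [map_mul, betaF_ghi, betaF_ι, unop_mul, unop_op]
      have comm : ∀ a : Kq, Gh * a = a * Gh → a * Ghi = Ghi * a := by
        intro a ha
        calc a * Ghi = Ghi * Gh * (a * Ghi) := by rw [kq_ginv', one_mul]
          _ = Ghi * (Gh * a) * Ghi := by noncomm_ring
          _ = Ghi * (a * Gh) * Ghi := by rw [ha]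
          _ = Ghi * a * (Gh * Ghi) := by noncomm_ring
          _ = Ghi * a := by rw [kq_ginv, mul_one]
      cases g with
      | om m => exact comm _ (kq_gh_comm_xm (-m))
      | xm m => exact comm _ (kq_gh_comm_om (-m))
      | gh => show Gh * Ghi = Ghi * Gh; rw [kq_ginv', kq_ginv]
      | ghi => rfl
  | ginv =>
      apply unop_injective
      simp only [map_mul, map_one, betaF_gh, betaF_ghi, unop_mul, unop_op, unop_one]
      exact kq_ginv'
  | ginv' =>
      apply unop_injective
      simp only [map_mul, map_one, betaF_gh, betaF_ghi, unop_mul, unop_op, unop_one]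
      exact kq_ginv
  | rel1 m n =>
      apply unop_injective
      have hGa_om : ∀ a b : ℤ, Om a * Xm b * (Gh * Gh) = Gh * Gh * Om a * Xm b := by
        intro a b
        calc Om a * Xm b * (Gh * Gh) = Om a * (Xm b * Gh) * Gh := by noncomm_ring
          _ = Om a * Gh * Xm b * Gh := by rw [← kq_gh_comm_xm]; noncomm_ring
          _ = Gh * Om a * (Xm b * Gh) := by rw [← kq_gh_comm_om]; noncomm_ring
          _ = Gh * Om a * (Gh * Xm b) := by rw [kq_gh_comm_xm]
          _ = Gh * (Om a * Gh) * Xm b := by noncomm_ring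
          _ = Gh * (Gh * Om a) * Xm b := by rw [kq_gh_comm_om]
          _ = Gh * Gh * Om a * Xm b := by noncomm_ring
      have hGa_xm : ∀ a b : ℤ, Xm a * Om b * (Gh * Gh) = Gh * Gh * Xm a * Om b := by
        intro a b
        calc Xm a * Om b * (Gh * Gh) = Xm a * (Om b * Gh) * Gh := by noncomm_ring
          _ = Xm a * Gh * Om b * Gh := by rw [← kq_gh_comm_om]; noncomm_ring
          _ = Gh * Xm a * (Om b * Gh) := by rw [← kq_gh_comm_xm]; noncomm_ring
          _ = Gh * Xm a * (Gh * Om b) := by rw [kq_gh_comm_om]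
          _ = Gh * (Xm a * Gh) * Om b := by noncomm_ring
          _ = Gh * (Gh * Xm a) * Om b := by rw [kq_gh_comm_xm]
          _ = Gh * Gh * Xm a * Om b := by noncomm_ring
      have key := kq_rel1 (-n - 1) (-m - 1)
      have e1 : (-m - 1 : ℤ) + 1 = -m := by ring
      have e2 : (-n - 1 : ℤ) + 1 = -n := by ring
      rw [e1, e2] at key
      simp only [map_sub, map_add, map_mul, map_smul, map_one, betaF_om, betaF_xm,
        gaF, map_mul, betaF_gh, apply_ite betaF, map_sub, map_smul, map_one, map_zero,
        unop_sub, unop_add, unop_mul, unop_smul, unop_op, unop_one, unop_zero,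
        apply_ite unop]
      simp only [show (-(n+1):ℤ) = -n-1 from by ring, show (-(m+1):ℤ) = -m-1 from by ring]
      have g1 : Om (-n-1) * (Xm (-m) * (Gh * Gh)) = Gh * Gh * Om (-n-1) * Xm (-m) := by
        rw [← mul_assoc]; exact hGa_om _ _
      have g2 : Xm (-m) * (Om (-n-1) * (Gh * Gh)) = Gh * Gh * Xm (-m) * Om (-n-1) := by
        rw [← mul_assoc]; exact hGa_xm _ _
      rw [g1, g2]
      by_cases hm : m = -n - 1
      · have hm' : (-n - 1 : ℤ) = -(-m - 1) - 1 := by omega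
        rw [if_pos hm] ; rw [if_pos hm'] at key
        exact key
      · have hm' : ¬ ((-n - 1 : ℤ) = -(-m - 1) - 1) := by omega
        rw [if_neg hm] ; rw [if_neg hm'] at key
        exact key
  | rel2 k l =>
      apply unop_injective
      simp only [map_sub, map_mul, map_smul, betaF_om, unop_sub, unop_mul, unop_smul,
        unop_op]
      -- goal in Kq : q^2 • (Xm (-l) * Xm (-(k+1))) - Xm (-(k+1)) * Xm (-l)
      --   = Xm (-(l+1)) * Xm (-k) - q^2 • (Xm (-k) * Xm (-(l+1)))
      have key := kq_rel3 (-l - 1) (-k - 1)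
      have e1 : (-l - 1 : ℤ) + 1 = -l := by ring
      have e2 : (-k - 1 : ℤ) + 1 = -k := by ring
      rw [e1, e2] at key
      have hq2 : (q ^ 2 : F) ≠ 0 := pow_ne_zero _ q_ne_zero
      have key2 := congrArg (fun z : Kq => (q ^ 2 : F) • z) key
      simp only [smul_sub, smul_smul, mul_inv_cancel₀ hq2, one_smul] at key2
      have e3 : (-(k + 1) : ℤ) = -k - 1 := by ring
      have e4 : (-(l + 1) : ℤ) = -l - 1 := by ring
      rw [e3, e4]
      exact key2
  | rel3 k l =>
      apply unop_injective
      simp only [map_sub, map_mul, map_smul, betaF_xm, unop_sub, unop_mul, unop_smul,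
        unop_op]
      have key := kq_rel2 (-l - 1) (-k - 1)
      have e1 : (-l - 1 : ℤ) + 1 = -l := by ring
      have e2 : (-k - 1 : ℤ) + 1 = -k := by ring
      rw [e1, e2] at key
      have hq2 : (q ^ 2 : F) ≠ 0 := pow_ne_zero _ q_ne_zero
      have key2 := congrArg (fun z : Kq => ((q ^ 2 : F))⁻¹ • z) key
      simp only [smul_sub, smul_smul, inv_mul_cancel₀ hq2, one_smul] at key2
      have e3 : (-(k + 1) : ℤ) = -k - 1 := by ring
      have e4 : (-(l + 1) : ℤ) = -l - 1 := by ring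
      rw [e3, e4]
      exact key2

/-- The anti-automorphism, as an algebra hom into the opposite algebra. -/
def Balg : Kq →ₐ[F] Kqᵐᵒᵖ :=
  RingQuot.liftAlgHom F ⟨betaF, betaF_rel⟩

lemma Balg_mk (x : KFA) : Balg (RingQuot.mkAlgHom F KRel x) = betaF x := by
  simp [Balg, RingQuot.liftAlgHom_mkAlgHom_apply]

/-- The anti-automorphism `ᾱ` as a plain function. -/
def alphaK : Kq → Kq := fun a => (Balg a).unop

lemma alphaK_add (a b : Kq) : alphaK (a + b) = alphaK a + alphaK b := by
  simp [alphaK, map_add]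

lemma alphaK_smul (c : F) (a : Kq) : alphaK (c • a) = c • alphaK a := by
  simp [alphaK, map_smul]

lemma alphaK_mul (a b : Kq) : alphaK (a * b) = alphaK b * alphaK a := by
  simp [alphaK, map_mul]

lemma alphaK_one : alphaK 1 = 1 := by
  simp [alphaK, map_one]

lemma alphaK_Gh : alphaK Gh = Gh := by
  simp [alphaK, Gh, Balg_mk, betaF_gh]

lemma alphaK_Ghi : alphaK Ghi = Ghi := by
  simp [alphaK, Ghi, Balg_mk, betaF_ghi]

lemma alphaK_Om (m : ℤ) : alphaK (Om m) = Xm (-m) := by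
  simp [alphaK, Om, Balg_mk, betaF_om]

lemma alphaK_Xm (m : ℤ) : alphaK (Xm m) = Om (-m) := by
  simp [alphaK, Xm, Balg_mk, betaF_xm]

lemma alphaK_algebraMap (c : F) : alphaK (algebraMap F Kq c) = algebraMap F Kq c := by
  simp [alphaK, AlgHom.commutes, MulOpposite.algebraMap_apply]

lemma alphaK_invol (a : Kq) : alphaK (alphaK a) = a := by
  obtain ⟨x, rfl⟩ := RingQuot.mkAlgHom_surjective F KRel a
  induction x using FreeAlgebra.induction with
  | grade0 c =>
      rw [AlgHom.commutes, alphaK_algebraMap, alphaK_algebraMap]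
  | grade1 g =>
      cases g with
      | om m =>
          show alphaK (alphaK (Om m)) = Om m
          rw [alphaK_Om, alphaK_Xm, neg_neg]
      | xm m =>
          show alphaK (alphaK (Xm m)) = Xm m
          rw [alphaK_Xm, alphaK_Om, neg_neg]
      | gh =>
          show alphaK (alphaK Gh) = Gh
          rw [alphaK_Gh, alphaK_Gh]
      | ghi =>
          show alphaK (alphaK Ghi) = Ghi
          rw [alphaK_Ghi, alphaK_Ghi]
  | mul x y hx hy =>
      rw [map_mul, alphaK_mul, alphaK_mul, hx, hy]
  | add x y hx hy =>
      rw [map_add, alphaK_add, alphaK_add, hx, hy]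


/-- There exists an involutive `F`-linear anti-automorphism `ᾱ` of `𝒦_q` with
`ᾱ(γ^{±1/2}) = γ^{±1/2}`, `ᾱ(X(m)) = Ω(−m)` and `ᾱ(Ω(m)) = X(−m)` for all `m ∈ ℤ`. -/
theorem stmt4 :
    ∃ α : Kq → Kq,
      Function.Bijective α ∧
      (∀ a b : Kq, α (a + b) = α a + α b) ∧
      (∀ (c : F) (a : Kq), α (c • a) = c • α a) ∧
      (∀ a b : Kq, α (a * b) = α b * α a) ∧
      α 1 = 1 ∧
      (∀ a : Kq, α (α a) = a) ∧
      α Gh = Gh ∧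
      α Ghi = Ghi ∧
      (∀ m : ℤ, α (Xm m) = Om (-m)) ∧
      (∀ m : ℤ, α (Om m) = Xm (-m)) := by
  refine ⟨alphaK, ?_, alphaK_add, alphaK_smul, alphaK_mul, alphaK_one, alphaK_invol,
    alphaK_Gh, alphaK_Ghi, alphaK_Xm, alphaK_Om⟩
  exact Function.bijective_iff_has_inverse.mpr ⟨alphaK, alphaK_invol, alphaK_invol⟩
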